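/- In B_3, the braid δ^n * τ_1^{u_1} * ⋯ * τ_t^{u_t} is conjugate to δ^n * τ_1^{u_2} * τ_2^{u_3} * ⋯ * τ_{t-1}^{u_t} * τ_{-n}^{u_1} whenever -n ≡ t (mod 3); i.e., cyclic permutation of the exponent tuple yields a conjugate braid when n + t ≡ 0 (mod 3). -/

import Mathlib

def B3rels : Set (FreeGroup (Fin 2)) :=
  {FreeGroup.of 0 * FreeGroup.of 1 * FreeGroup.of 0 *
    (FreeGroup.of 1 * FreeGroup.of 0 * FreeGroup.of 1)⁻¹}

/-- The braid group on 3 strands, presented as ⟨a, b | aba = bab⟩. -/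
abbrev B3 := PresentedGroup B3rels

def a : B3 := PresentedGroup.of 0
def b : B3 := PresentedGroup.of 1
def x : B3 := a⁻¹ * b * a
def δ : B3 := b * a
def Δ : B3 := a * b * a

/-- τ_i = a, b, x according to i ≡ 1, 2, 0 (mod 3). -/
def τ (i : ℤ) : B3 := if i % 3 = 1 then a else if i % 3 = 2 then b else x

/-- The Xu word δ^n τ_1^{u 0} τ_2^{u 1} ⋯ τ_t^{u (t-1)}. -/
def xuWord (n : ℤ) (t : ℕ) (u : ℕ → ℕ) : B3 :=
  δ ^ n * ((List.range t).map (fun (i : ℕ) => τ ((i : ℤ) + 1) ^ u i)).prod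

lemma braid : a * b * a = b * a * b := by
  have h : (QuotientGroup.mk (FreeGroup.of 0 * FreeGroup.of 1 * FreeGroup.of 0 *
      (FreeGroup.of 1 * FreeGroup.of 0 * FreeGroup.of 1)⁻¹ : FreeGroup (Fin 2)) : B3) = 1 := by
    apply (QuotientGroup.eq_one_iff _).mpr
    exact Subgroup.subset_normalClosure rfl
  have h2 : a * b * a * (b * a * b)⁻¹ = 1 := h
  group at h2 ⊢
  exact mul_inv_eq_one.mp h2

lemma dxd : δ * x * δ⁻¹ = b := by simp only [δ, x, mul_inv_rev]; group
lemma dbd : δ * b * δ⁻¹ = a := by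
  simp only [δ, mul_inv_rev]
  calc b * a * b * (a⁻¹ * b⁻¹) = (b * a * b) * a⁻¹ * b⁻¹ := by group
    _ = (a * b * a) * a⁻¹ * b⁻¹ := by rw [braid]
    _ = a := by group
lemma dad : δ * a * δ⁻¹ = x := by
  apply mul_left_cancel (a := a)
  simp only [δ, x, mul_inv_rev]
  calc a * (b * a * a * (a⁻¹ * b⁻¹)) = (a * b * a) * b⁻¹ := by group
    _ = (b * a * b) * b⁻¹ := by rw [braid]
    _ = a * (a⁻¹ * b * a) := by group

lemma dtd (i : ℤ) : δ * τ i * δ⁻¹ = τ (i - 1) := by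
  have h3 : i % 3 = 0 ∨ i % 3 = 1 ∨ i % 3 = 2 := by omega
  rcases h3 with h | h | h
  · have h' : (i - 1) % 3 = 2 := by omega
    simp [τ, h, h', dxd]
  · have h' : (i - 1) % 3 = 0 := by omega
    simp [τ, h, h', dad]
  · have h' : (i - 1) % 3 = 1 := by omega
    simp [τ, h, h', dbd]

lemma dtd' (i : ℤ) : δ⁻¹ * τ i * δ = τ (i + 1) := by
  have := dtd (i + 1)
  simp only [add_sub_cancel_right] at this
  rw [← this]; group

lemma dn_tau (n : ℤ) : ∀ i, δ ^ n * τ i * (δ ^ n)⁻¹ = τ (i - n) := by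
  induction n using Int.induction_on with
  | zero => intro i; simp
  | succ k ih =>
    intro i
    rw [zpow_add_one, mul_inv_rev]
    calc δ ^ (k : ℤ) * δ * τ i * (δ⁻¹ * (δ ^ (k : ℤ))⁻¹)
        = δ ^ (k : ℤ) * (δ * τ i * δ⁻¹) * (δ ^ (k : ℤ))⁻¹ := by group
      _ = δ ^ (k : ℤ) * τ (i - 1) * (δ ^ (k : ℤ))⁻¹ := by rw [dtd]
      _ = τ (i - 1 - k) := ih _
      _ = τ (i - (k + 1)) := by ring_nf
  | pred k ih =>
    intro i
    rw [show (-(k : ℤ) - 1) = -k + -1 by ring, zpow_add, mul_inv_rev, zpow_neg_one]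
    calc δ ^ (-(k : ℤ)) * δ⁻¹ * τ i * ((δ⁻¹)⁻¹ * (δ ^ (-(k : ℤ)))⁻¹)
        = δ ^ (-(k : ℤ)) * (δ⁻¹ * τ i * δ) * (δ ^ (-(k : ℤ)))⁻¹ := by group
      _ = δ ^ (-(k : ℤ)) * τ (i + 1) * (δ ^ (-(k : ℤ)))⁻¹ := by rw [dtd']
      _ = τ (i + 1 - -k) := ih _
      _ = τ (i - (-k - 1)) := by ring_nf

lemma dtd_pow (i : ℤ) (k : ℕ) : δ * τ i ^ k * δ⁻¹ = τ (i - 1) ^ k := by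
  rw [← dtd, conj_pow]

lemma dn_tau_pow (n i : ℤ) (k : ℕ) : δ ^ n * τ i ^ k * (δ ^ n)⁻¹ = τ (i - n) ^ k := by
  rw [← dn_tau, conj_pow]

lemma conj_list_prod (g : B3) (l : List B3) :
    g * l.prod * g⁻¹ = (l.map (fun z => g * z * g⁻¹)).prod := by
  induction l with
  | nil => simp
  | cons h t ih =>
    rw [List.map_cons, List.prod_cons, List.prod_cons, ← ih]
    group

theorem xuWord_cyclic_conjugate (n : ℤ) (t : ℕ) (u : ℕ → ℕ)
    (ht : 1 ≤ t) (hu : ∀ i < t, 1 ≤ u i) (h3 : (n + t) % 3 = 0) :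
    ∃ g : B3, g * xuWord n t u * g⁻¹ = xuWord n t (fun i => u ((i + 1) % t)) := by
  obtain ⟨s, rfl⟩ : ∃ s, t = s + 1 := ⟨t - 1, by omega⟩
  set T : B3 := τ 1 ^ u 0 with hT
  set P : B3 := ((List.range s).map (fun (i : ℕ) => τ ((i : ℤ) + 2) ^ u (i + 1))).prod with hPdef
  set Q : B3 := ((List.range s).map (fun (i : ℕ) => τ ((i : ℤ) + 1) ^ u (i + 1))).prod with hQdef
  have hW : xuWord n (s + 1) u = δ ^ n * (T * P) := by
    rw [xuWord, List.range_succ_eq_map, List.map_cons, List.prod_cons, List.map_map]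
    have hm : (List.range s).map ((fun (i : ℕ) => τ ((i : ℤ) + 1) ^ u i) ∘ Nat.succ)
        = (List.range s).map (fun (i : ℕ) => τ ((i : ℤ) + 2) ^ u (i + 1)) := by
      apply List.map_congr_left
      intro i _
      simp only [Function.comp_apply, Nat.succ_eq_add_one]
      push_cast
      ring_nf
    rw [hm]
    norm_num [hT]
    exact hPdef.symm
  have hTarget : xuWord n (s + 1) (fun i => u ((i + 1) % (s + 1)))
      = δ ^ n * (Q * τ ((s : ℤ) + 1) ^ u 0) := by
    rw [xuWord, List.range_succ, List.map_append, List.prod_append]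
    have hm : (List.range s).map (fun (i : ℕ) => τ ((i : ℤ) + 1) ^ u ((i + 1) % (s + 1)))
        = (List.range s).map (fun (i : ℕ) => τ ((i : ℤ) + 1) ^ u (i + 1)) := by
      apply List.map_congr_left
      intro i hi
      rw [List.mem_range] at hi
      rw [Nat.mod_eq_of_lt (by omega)]
    rw [hm]
    simp only [List.map_cons, List.map_nil, List.prod_cons, List.prod_nil, mul_one]
    rw [Nat.mod_self]
  have hPQ : δ * P * δ⁻¹ = Q := by
    rw [hPdef, hQdef, conj_list_prod, List.map_map]
    congr 1
    apply List.map_congr_left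
    intro i _
    simp only [Function.comp_apply]
    rw [dtd_pow, show ((i:ℤ) + 2 - 1) = (i:ℤ) + 1 by ring]
  refine ⟨δ ^ (n + 1) * T⁻¹ * δ ^ (-n), ?_⟩
  rw [hW, hTarget]
  have h1 : δ ^ n * T * (δ ^ n)⁻¹ = τ (1 - n) ^ u 0 := dn_tau_pow n 1 (u 0)
  have h2 : δ * τ (1 - n) ^ u 0 * δ⁻¹ = τ (-n) ^ u 0 := by
    have := dtd_pow (1 - n) (u 0)
    rwa [show (1 - n - 1 : ℤ) = -n by ring] at this
  have htau : τ (-n) = τ ((s : ℤ) + 1) := by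
    unfold τ
    have hmod : (-n) % 3 = ((s : ℤ) + 1) % 3 := by
      push_cast at h3; omega
    rw [hmod]
  calc (δ ^ (n + 1) * T⁻¹ * δ ^ (-n)) * (δ ^ n * (T * P)) * (δ ^ (n + 1) * T⁻¹ * δ ^ (-n))⁻¹
      = δ ^ (n + 1) * P * (δ ^ n * T * (δ ^ n)⁻¹) * δ⁻¹ := by group
    _ = δ ^ (n + 1) * P * τ (1 - n) ^ u 0 * δ⁻¹ := by rw [h1]
    _ = δ ^ n * (δ * P * δ⁻¹) * (δ * τ (1 - n) ^ u 0 * δ⁻¹) := by group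
    _ = δ ^ n * Q * τ (-n) ^ u 0 := by rw [hPQ, h2]
    _ = δ ^ n * (Q * τ ((s : ℤ) + 1) ^ u 0) := by rw [htau, mul_assoc]
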